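/- For a finite-horizon MDP, there exists a deterministic time-dependent policy π* that is simultaneously optimal from every state and time: V_{π*}(t, s) = V*(t, s) for all t ≤ T and all states s. In particular, any policy that at each time t < T and state s selects an action attaining the maximum of the optimal action-value Q*(t, s, a) := r(s, a) + E_{s' ∼ P(s, a)}[V*(t+1, s')] over a ∈ A is such an optimal policy. -/

import Mathlib

section FiniteHorizonMDP

variable {S A : Type}

/-- Value function of a deterministic time-dependent policy `π` in a finite-horizon MDP
with horizon `T`, defined by backward recursion: `Vpi P r T π T s = 0` and
`Vpi P r T π t s = r s (π t s) + E_{s' ~ P s (π t s)}[Vpi P r T π (t+1) s']` for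
`t < T`. -/
noncomputable def Vpi [Fintype S] (P : S → A → PMF S) (r : S → A → ℝ) (T : ℕ)
    (π : ℕ → S → A) (t : ℕ) (s : S) : ℝ :=
  if _h : t < T then
    r s (π t s) + ∑ s' : S, ((P s (π t s)) s').toReal * Vpi P r T π (t + 1) s'
  else 0
termination_by T - t
decreasing_by omega

/-- The optimal value function of a finite-horizon MDP: the maximum of `Vpi` over all
deterministic time-dependent policies. -/
noncomputable def Vstar [Fintype S] (P : S → A → PMF S) (r : S → A → ℝ) (T : ℕ)
    (t : ℕ) (s : S) : ℝ :=
  ⨆ π : ℕ → S → A, Vpi P r T π t s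

end FiniteHorizonMDP

/-- The optimal action-value function
`Q*(t, s, a) = r(s, a) + E_{s' ~ P(s, a)}[V*(t+1, s')]`. -/
noncomputable def Qstar {S A : Type} [Fintype S] (P : S → A → PMF S) (r : S → A → ℝ)
    (T : ℕ) (t : ℕ) (s : S) (a : A) : ℝ :=
  r s a + ∑ s' : S, ((P s a) s').toReal * Vstar P r T (t + 1) s'

section Aux

variable {S A : Type} [Fintype S] [Nonempty S] [Fintype A] [Nonempty A]
  (P : S → A → PMF S) (r : S → A → ℝ) (T : ℕ)

lemma sum_toReal_eq_one (s : S) (a : A) : ∑ s' : S, ((P s a) s').toReal = 1 := by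
  have h := (P s a).tsum_coe
  rw [tsum_fintype] at h
  rw [← ENNReal.toReal_sum (fun s' _ => PMF.apply_ne_top _ _), h, ENNReal.toReal_one]

lemma Vpi_le_bound (C : ℝ) (hC0 : 0 ≤ C) (hC : ∀ s a, r s a ≤ C) :
    ∀ n t, T ≤ t + n → ∀ (π : ℕ → S → A) (s : S), Vpi P r T π t s ≤ n * C := by
  intro n
  induction n with
  | zero =>
    intro t ht π s
    rw [Vpi, dif_neg (by omega)]
    simp
  | succ n ih =>
    intro t ht π s
    rw [Vpi]
    split
    · calc r s (π t s) + ∑ s' : S, ((P s (π t s)) s').toReal * Vpi P r T π (t + 1) s'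
          ≤ C + ∑ s' : S, ((P s (π t s)) s').toReal * (n * C) := by
            refine add_le_add (hC _ _) (Finset.sum_le_sum fun s' _ => ?_)
            exact mul_le_mul_of_nonneg_left (ih (t + 1) (by omega) π s')
              ENNReal.toReal_nonneg
        _ = C + n * C := by rw [← Finset.sum_mul, sum_toReal_eq_one, one_mul]
        _ = (n + 1 : ℕ) * C := by push_cast; ring
    · positivity

lemma bddAbove_Vpi (t : ℕ) (s : S) :
    BddAbove (Set.range fun π : ℕ → S → A => Vpi P r T π t s) := by
  obtain ⟨⟨s0, a0⟩, hm⟩ := Finite.exists_max (fun p : S × A => r p.1 p.2)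
  refine ⟨(T - t : ℕ) * max (r s0 a0) 0, ?_⟩
  rintro x ⟨π, rfl⟩
  exact Vpi_le_bound P r T _ (le_max_right _ _)
    (fun s a => le_trans (hm (s, a)) (le_max_left _ _)) (T - t) t (by omega) π s

lemma Vpi_le_Vstar (π : ℕ → S → A) (t : ℕ) (s : S) :
    Vpi P r T π t s ≤ Vstar P r T t s :=
  le_ciSup (bddAbove_Vpi P r T t s) π

lemma Vpi_eq_zero (π : ℕ → S → A) {t : ℕ} (h : T ≤ t) (s : S) :
    Vpi P r T π t s = 0 := by
  rw [Vpi, dif_neg (by omega)]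

lemma Vstar_eq_zero {t : ℕ} (h : T ≤ t) (s : S) : Vstar P r T t s = 0 := by
  have : (fun π : ℕ → S → A => Vpi P r T π t s) = fun _ => (0 : ℝ) := by
    funext π; exact Vpi_eq_zero P r T π h s
  rw [Vstar, this, ciSup_const]

lemma Vpi_le_Qstar (π : ℕ → S → A) {t : ℕ} (h : t < T) (s : S) :
    Vpi P r T π t s ≤ Qstar P r T t s (π t s) := by
  rw [Vpi, dif_pos h, Qstar]
  refine add_le_add le_rfl (Finset.sum_le_sum fun s' _ => ?_)
  exact mul_le_mul_of_nonneg_left (Vpi_le_Vstar P r T π (t + 1) s')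
    ENNReal.toReal_nonneg

end Aux

/-- For a finite-horizon MDP, there exists a deterministic
time-dependent policy `π*` that is simultaneously optimal from every state and time:
`V_π*(t, s) = V*(t, s)` for all `t ≤ T` and all states `s`. In particular, any policy
that at each time `t < T` and state `s` selects an action attaining the maximum of the
optimal action-value `Q*(t, s, ·)` over `A` is such an optimal policy. -/
theorem exists_simultaneously_optimal_policy
    {S A : Type} [Fintype S] [Nonempty S] [Fintype A] [Nonempty A]
    (P : S → A → PMF S) (r : S → A → ℝ) (T : ℕ) :
    (∃ πstar : ℕ → S → A, ∀ t ≤ T, ∀ s : S, Vpi P r T πstar t s = Vstar P r T t s) ∧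
      ∀ π : ℕ → S → A,
        (∀ t, t < T → ∀ s : S, ∀ a : A, Qstar P r T t s a ≤ Qstar P r T t s (π t s)) →
        ∀ t ≤ T, ∀ s : S, Vpi P r T π t s = Vstar P r T t s := by
  have key : ∀ π : ℕ → S → A,
      (∀ t, t < T → ∀ s : S, ∀ a : A, Qstar P r T t s a ≤ Qstar P r T t s (π t s)) →
      ∀ t ≤ T, ∀ s : S, Vpi P r T π t s = Vstar P r T t s := by
    intro π hgreedy
    suffices h : ∀ n t, T ≤ t + n → t ≤ T → ∀ s : S,
        Vpi P r T π t s = Vstar P r T t s by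
      intro t ht s; exact h (T - t) t (by omega) ht s
    intro n
    induction n with
    | zero =>
      intro t h1 h2 s
      rw [Vpi_eq_zero P r T π (by omega) s, Vstar_eq_zero P r T (by omega) s]
    | succ n ih =>
      intro t h1 h2 s
      rcases eq_or_lt_of_le h2 with rfl | hlt
      · rw [Vpi_eq_zero P r _ π le_rfl s, Vstar_eq_zero P r _ le_rfl s]
      · have ih' : ∀ s', Vpi P r T π (t + 1) s' = Vstar P r T (t + 1) s' :=
          fun s' => ih (t + 1) (by omega) (by omega) s'
        have hQ : Vpi P r T π t s = Qstar P r T t s (π t s) := by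
          rw [Vpi, dif_pos hlt, Qstar]
          congr 1
          exact Finset.sum_congr rfl fun s' _ => by rw [ih']
        have hub : Vstar P r T t s ≤ Qstar P r T t s (π t s) := by
          refine ciSup_le fun π' => ?_
          exact le_trans (Vpi_le_Qstar P r T π' hlt s) (hgreedy t hlt s (π' t s))
        have hlb : Vpi P r T π t s ≤ Vstar P r T t s := Vpi_le_Vstar P r T π t s
        linarith
  constructor
  · choose f hf using fun (t : ℕ) (s : S) =>
      Finite.exists_max (fun a : A => Qstar P r T t s a)
    exact ⟨f, key f fun t _ s a => hf t s a⟩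
  · exact key
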